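/- Let G be a subgroup of the hyperoctahedral group H_n = {±1}^n ⋊ S_n of order n! whose image under the projection π : H_n → S_n is all of S_n. Then G is conjugate in H_n either to the natural subgroup S_n or to S_n^ε = {δ(sgn(σ))·σ : σ ∈ S_n}. -/

import Mathlib

open Equiv Equiv.Perm SemidirectProduct

/-- The hyperoctahedral group `H_n = {±1}^n ⋊ S_n`, with `S_n` permuting coordinates. -/
abbrev Hyperoctahedral (n : ℕ) :=
  (Fin n → ℤˣ) ⋊[(mulAutArrow : Equiv.Perm (Fin n) →* MulAut (Fin n → ℤˣ))] Equiv.Perm (Fin n)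

lemma perm_hom_eq_one_or_sign {α : Type*} [DecidableEq α] [Fintype α]
    (φ : Equiv.Perm α →* ℤˣ) :
    (∀ σ, φ σ = 1) ∨ (∀ σ, φ σ = Equiv.Perm.sign σ) := by
  by_cases h : ∀ (x y : α), x ≠ y → φ (Equiv.swap x y) = 1
  · left
    intro σ
    refine σ.swap_induction_on (by simp) ?_
    intro f x y hxy hf
    rw [map_mul, h x y hxy, hf, one_mul]
  · right
    push_neg at h
    obtain ⟨x, y, hxy, hval⟩ := h
    have hx : φ (Equiv.swap x y) = -1 := by
      rcases Int.units_eq_one_or (φ (Equiv.swap x y)) with h1 | h1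
      · exact absurd h1 hval
      · exact h1
    have hswap : ∀ (a b : α), a ≠ b → φ (Equiv.swap a b) = -1 := by
      intro a b hab
      obtain ⟨c, hc⟩ := Equiv.Perm.isConj_swap hxy hab
      have h2 := congrArg φ hc.eq
      rw [map_mul, map_mul, mul_comm (φ (swap a b))] at h2
      rw [← mul_left_cancel h2, hx]
    intro σ
    refine σ.swap_induction_on (by simp) ?_
    intro f a b hab hf
    rw [map_mul, hswap a b hab, hf, map_mul, Equiv.Perm.sign_swap hab]

lemma key {n : ℕ} [NeZero n]
    (G : Subgroup (Hyperoctahedral n)) (hcard : Nat.card G = Nat.factorial n)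
    (hproj : Subgroup.map SemidirectProduct.rightHom G = ⊤) :
    ∃ h : Hyperoctahedral n,
      (fun k => h * k * h⁻¹) '' (G : Set (Hyperoctahedral n)) =
          Set.range (SemidirectProduct.inr : Equiv.Perm (Fin n) →* Hyperoctahedral n) ∨
        (fun k => h * k * h⁻¹) '' (G : Set (Hyperoctahedral n)) =
          Set.range fun σ : Equiv.Perm (Fin n) =>
            (⟨fun _ => Equiv.Perm.sign σ, σ⟩ : Hyperoctahedral n) := by
  haveI : Finite (Hyperoctahedral n) := by
    refine Finite.of_equiv ((Fin n → ℤˣ) × Equiv.Perm (Fin n))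
      ⟨fun p => ⟨p.1, p.2⟩, fun x => (x.left, x.right), fun p => rfl, fun x => rfl⟩
  have hsurj : Function.Surjective (rightHom.comp G.subtype) := by
    intro σ
    have : σ ∈ (⊤ : Subgroup (Equiv.Perm (Fin n))) := Subgroup.mem_top σ
    rw [← hproj] at this
    obtain ⟨g, hg, hg2⟩ := this
    exact ⟨⟨g, hg⟩, hg2⟩
  have hbij : Function.Bijective (rightHom.comp G.subtype) := by
    rw [Nat.bijective_iff_surjective_and_card]
    refine ⟨hsurj, ?_⟩
    rw [hcard, Nat.card_eq_fintype_card, Fintype.card_perm, Fintype.card_fin]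
  let μ : G ≃* Equiv.Perm (Fin n) := MulEquiv.ofBijective _ hbij
  let s : Equiv.Perm (Fin n) →* G := μ.symm.toMonoidHom
  let f : Equiv.Perm (Fin n) → (Fin n → ℤˣ) := fun σ => ((s σ : G) : Hyperoctahedral n).left
  have hs : ∀ σ, ((s σ : G) : Hyperoctahedral n) = ⟨f σ, σ⟩ := by
    intro σ
    have hr : ((s σ : G) : Hyperoctahedral n).right = σ := μ.apply_symm_apply σ
    exact SemidirectProduct.ext rfl hr
  have hGset : (G : Set (Hyperoctahedral n))
      = Set.range (fun σ => (⟨f σ, σ⟩ : Hyperoctahedral n)) := by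
    ext g
    constructor
    · intro hg
      refine ⟨rightHom g, ?_⟩
      have h1 : s (rightHom g) = ⟨g, hg⟩ := by
        have h2 : μ ⟨g, hg⟩ = rightHom g := rfl
        rw [← h2]
        exact μ.symm_apply_apply _
      show (⟨f (rightHom g), rightHom g⟩ : Hyperoctahedral n) = g
      rw [← hs, h1]
    · rintro ⟨σ, rfl⟩
      show (⟨f σ, σ⟩ : Hyperoctahedral n) ∈ (G : Set (Hyperoctahedral n))
      rw [← hs σ]
      exact (s σ).2
  have hcoc : ∀ (σ τ : Equiv.Perm (Fin n)) (i : Fin n),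
      f (σ * τ) i = f σ i * f τ (σ⁻¹ i) := by
    intro σ τ i
    have h1 : ((s (σ * τ) : G) : Hyperoctahedral n)
        = ((s σ : G) : Hyperoctahedral n) * ((s τ : G) : Hyperoctahedral n) := by
      exact congrArg Subtype.val (map_mul s σ τ)
    rw [hs, hs, hs] at h1
    have h2 := congrFun (congrArg SemidirectProduct.left h1) i
    rw [SemidirectProduct.mul_left] at h2
    exact h2
  have hf1 : f 1 = 1 := by
    have h1 : ((s 1 : G) : Hyperoctahedral n) = 1 := by rw [map_one]; rfl
    rw [hs 1] at h1
    exact congrArg SemidirectProduct.left h1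
  have hsw : ∀ i : Fin n, f (Equiv.swap 0 i) 0 = f (Equiv.swap 0 i) i := by
    intro i
    have h1 := hcoc (Equiv.swap 0 i) (Equiv.swap 0 i) i
    rw [Equiv.swap_mul_self, hf1, Equiv.swap_inv, Equiv.swap_apply_right] at h1
    have h2 : f (Equiv.swap 0 i) i * f (Equiv.swap 0 i) 0 = 1 := h1.symm
    have h3 : f (Equiv.swap 0 i) 0 = (f (Equiv.swap 0 i) i)⁻¹ :=
      eq_inv_of_mul_eq_one_left (by rw [mul_comm] at h2; exact h2)
    rw [h3, Int.units_inv_eq_self]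
  classical
  let Φ : Equiv.Perm {x : Fin n // x ≠ 0} →* ℤˣ :=
    { toFun := fun τ => f (Equiv.Perm.ofSubtype τ) 0
      map_one' := by
        show f (Equiv.Perm.ofSubtype (1 : Equiv.Perm {x : Fin n // x ≠ 0})) 0 = 1
        rw [map_one, hf1]; rfl
      map_mul' := by
        intro τ₁ τ₂
        show f (Equiv.Perm.ofSubtype (τ₁ * τ₂)) 0
          = f (Equiv.Perm.ofSubtype τ₁) 0 * f (Equiv.Perm.ofSubtype τ₂) 0
        rw [map_mul, hcoc]
        have h0 : (Equiv.Perm.ofSubtype τ₁)⁻¹ (0 : Fin n) = 0 := by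
          rw [Equiv.Perm.inv_eq_iff_eq]
          exact (Equiv.Perm.ofSubtype_apply_of_not_mem τ₁ (by simp)).symm
        rw [h0] }
  obtain ⟨χ, hχor, hkey⟩ :
      ∃ χ : Equiv.Perm (Fin n) →* ℤˣ,
        (χ = 1 ∨ χ = Equiv.Perm.sign) ∧
          ∀ ρ : Equiv.Perm (Fin n), ρ 0 = 0 → f ρ 0 = χ ρ := by
    have hfix : ∀ (ρ : Equiv.Perm (Fin n)) (hρ0 : ρ 0 = 0),
        ∃ τ : Equiv.Perm {x : Fin n // x ≠ 0}, Equiv.Perm.ofSubtype τ = ρ ∧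
          Equiv.Perm.sign τ = Equiv.Perm.sign ρ := by
      intro ρ hρ0
      have h₁ : ∀ x : Fin n, x ≠ 0 ↔ ρ x ≠ 0 := fun x =>
        not_congr ⟨fun h => by rw [h, hρ0], fun h => ρ.injective (by rw [h, hρ0])⟩
      have h₂ : ∀ x : Fin n, ρ x ≠ x → x ≠ 0 := by
        intro x hx h0
        exact hx (by rw [h0, hρ0])
      refine ⟨ρ.subtypePerm (fun x => (h₁ x).symm), Equiv.Perm.ofSubtype_subtypePerm (fun x => (h₁ x).symm) h₂, ?_⟩
      rw [← Equiv.Perm.sign_ofSubtype, Equiv.Perm.ofSubtype_subtypePerm (fun x => (h₁ x).symm) h₂]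
    rcases perm_hom_eq_one_or_sign Φ with hΦ | hΦ
    · refine ⟨1, Or.inl rfl, ?_⟩
      intro ρ hρ0
      obtain ⟨τ, hτ, -⟩ := hfix ρ hρ0
      have := hΦ τ
      rw [show Φ τ = f (Equiv.Perm.ofSubtype τ) 0 from rfl, hτ] at this
      rw [this]; rfl
    · refine ⟨Equiv.Perm.sign, Or.inr rfl, ?_⟩
      intro ρ hρ0
      obtain ⟨τ, hτ, hτs⟩ := hfix ρ hρ0
      have := hΦ τ
      rw [show Φ τ = f (Equiv.Perm.ofSubtype τ) 0 from rfl, hτ, hτs] at this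
      exact this
  set gg : Fin n → ℤˣ := fun i => f (Equiv.swap 0 i) i * χ (Equiv.swap 0 i) with hgg
  have hmain : ∀ (σ : Equiv.Perm (Fin n)) (i : Fin n),
      f σ (σ i) = gg (σ i) * χ σ * gg i := by
    intro σ i
    set ρ : Equiv.Perm (Fin n) := Equiv.swap 0 (σ i) * σ * Equiv.swap 0 i with hρdef
    have hρ0 : ρ 0 = 0 := by
      rw [hρdef]
      simp only [Equiv.Perm.mul_apply, Equiv.swap_apply_left, Equiv.swap_apply_right]
    have hdecomp : σ = Equiv.swap 0 (σ i) * (ρ * Equiv.swap 0 i) := by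
      rw [hρdef]
      ext x
      simp [Equiv.Perm.mul_apply, Equiv.swap_apply_self]
    have hρinv : ρ⁻¹ 0 = 0 := Equiv.Perm.inv_eq_iff_eq.mpr hρ0.symm
    have step1 : f σ (σ i)
        = f (Equiv.swap 0 (σ i)) (σ i) * f (ρ * Equiv.swap 0 i) 0 := by
      rw [show f σ = f (Equiv.swap 0 (σ i) * (ρ * Equiv.swap 0 i)) from congrArg f hdecomp,
        hcoc, Equiv.swap_inv, Equiv.swap_apply_right]
    have step2 : f (ρ * Equiv.swap 0 i) 0 = χ ρ * f (Equiv.swap 0 i) i := by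
      rw [hcoc, hρinv, hkey ρ hρ0, hsw]
    have step3 : χ ρ = χ (Equiv.swap 0 (σ i)) * χ σ * χ (Equiv.swap 0 i) := by
      rw [hρdef, map_mul, map_mul]
    rw [step1, step2, step3]
    simp only [hgg]
    ext
    push_cast
    ring
  refine ⟨inl gg, ?_⟩
  have hconj : ∀ σ : Equiv.Perm (Fin n),
      (inl gg : Hyperoctahedral n) * ⟨f σ, σ⟩ * (inl gg)⁻¹
        = (⟨fun _ => χ σ, σ⟩ : Hyperoctahedral n) := by
    intro σ
    have hfj : ∀ j : Fin n, f σ j = gg j * χ σ * gg (σ⁻¹ j) := by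
      intro j
      have := hmain σ (σ⁻¹ j)
      rwa [← Equiv.Perm.mul_apply, mul_inv_cancel, Equiv.Perm.one_apply] at this
    rw [← map_inv]
    refine SemidirectProduct.ext ?_ ?_
    · funext j
      rw [SemidirectProduct.mul_left, SemidirectProduct.mul_left]
      simp only [SemidirectProduct.left_inl, SemidirectProduct.right_inl,
        SemidirectProduct.mul_right, map_one, MulAut.one_apply]
      show gg j * f σ j * (mulAutArrow σ gg⁻¹) j = χ σ
      have harr : (mulAutArrow σ gg⁻¹) j = (gg (σ⁻¹ j))⁻¹ := rfl
      rw [harr, hfj j]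
      generalize gg j = a
      generalize gg (σ⁻¹ j) = b
      generalize χ σ = c
      rw [Int.units_inv_eq_self]
      have h2 : a * (a * c * b) * b = (a * a) * c * (b * b) := by ext; push_cast; ring
      rw [h2, Int.units_mul_self, Int.units_mul_self, one_mul, mul_one]
    · rw [SemidirectProduct.mul_right, SemidirectProduct.mul_right,
        SemidirectProduct.right_inl, SemidirectProduct.right_inl]
      simp
  rw [hGset, ← Set.range_comp]
  have hre : ((fun k => (inl gg : Hyperoctahedral n) * k * (inl gg : Hyperoctahedral n)⁻¹)
        ∘ fun σ => (⟨f σ, σ⟩ : Hyperoctahedral n))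
      = fun σ => (⟨fun _ => χ σ, σ⟩ : Hyperoctahedral n) := funext fun σ => hconj σ
  rw [hre]
  rcases hχor with rfl | rfl
  · left; rfl
  · right; rfl

/-- A subgroup of `H_n` of order `n!` projecting onto `S_n` is conjugate in `H_n` either to
the natural subgroup `S_n` or to `S_n^ε = {δ(sgn σ)·σ : σ ∈ S_n}`. -/
theorem subgroup_order_factorial_conj_sn_or_snEps {n : ℕ}
    (G : Subgroup (Hyperoctahedral n)) (hcard : Nat.card G = Nat.factorial n)
    (hproj : Subgroup.map SemidirectProduct.rightHom G = ⊤) :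
    ∃ h : Hyperoctahedral n,
      (fun k => h * k * h⁻¹) '' (G : Set (Hyperoctahedral n)) =
          Set.range (SemidirectProduct.inr : Equiv.Perm (Fin n) →* Hyperoctahedral n) ∨
        (fun k => h * k * h⁻¹) '' (G : Set (Hyperoctahedral n)) =
          Set.range fun σ : Equiv.Perm (Fin n) =>
            (⟨fun _ => Equiv.Perm.sign σ, σ⟩ : Hyperoctahedral n) := by
  rcases eq_or_ne n 0 with rfl | hn
  · haveI : Subsingleton (Hyperoctahedral 0) := by
      constructor
      intro a b
      ext x
      · exact x.elim0
      · exact x.elim0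
    refine ⟨1, Or.inl ?_⟩
    ext k
    constructor
    · rintro -
      exact ⟨1, Subsingleton.elim _ _⟩
    · rintro -
      exact ⟨1, G.one_mem, Subsingleton.elim _ _⟩
  · haveI : NeZero n := ⟨hn⟩
    exact key G hcard hproj
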